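/- arXiv:2407.12316 — 2 statements merged into one kernel-verified Lean document; each statement's English description precedes it below -/
import Mathlib

section
/- If a nonnegative sequence δ(k) satisfies δ(k) ≤ C(1+k)^{-α} for all k ≥ 0 with α > 1, then for every j ≥ 0, the sum ∑_{s=0}^∞ δ(s)·δ(j+s) ≤ C'·(1+j)^{-α} for some constant C' depending only on C and α. -/
theorem stmt_0 (δ : ℕ → ℝ) (C α : ℝ) (hC : 0 < C) (hα : 1 < α)
    (hδ0 : ∀ k, 0 ≤ δ k) (hδ : ∀ k : ℕ, δ k ≤ C * (1 + (k : ℝ)) ^ (-α)) :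
    ∃ C' : ℝ, 0 < C' ∧ ∀ j : ℕ,
      ∑' s : ℕ, δ s * δ (j + s) ≤ C' * (1 + (j : ℝ)) ^ (-α) := by
  have hg : Summable (fun s : ℕ => C * (1 + (s : ℝ)) ^ (-α)) := by
    have h1 : Summable (fun n : ℕ => ((n : ℝ)) ^ (-α)) :=
      Real.summable_nat_rpow.mpr (by linarith)
    have h2 := h1.comp_injective (add_left_injective 1)
    have h3 : (fun s : ℕ => (1 + (s : ℝ)) ^ (-α))
        = (fun n : ℕ => ((n : ℝ)) ^ (-α)) ∘ (· + 1) := by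
      funext s; simp [Function.comp]; ring_nf
    exact (h3 ▸ h2).mul_left C
  set S : ℝ := ∑' s : ℕ, C * (1 + (s : ℝ)) ^ (-α) with hS
  have hpos : ∀ s : ℕ, (0:ℝ) < (1 + (s : ℝ)) ^ (-α) := fun s =>
    Real.rpow_pos_of_pos (by positivity) _
  have hSpos : 0 < S := by
    have := Summable.tsum_pos hg (fun s => le_of_lt (by positivity)) 0
    exact this (by positivity)
  refine ⟨S * C, by positivity, fun j => ?_⟩
  have hterm : ∀ s : ℕ, δ s * δ (j + s)
      ≤ (C * (1 + (s : ℝ)) ^ (-α)) * (C * (1 + (j : ℝ)) ^ (-α)) := by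
    intro s
    have h1 : δ (j + s) ≤ C * (1 + (j : ℝ)) ^ (-α) := by
      refine (hδ (j + s)).trans ?_
      have : (1 + (j : ℝ)) ^ (-α) ≥ (1 + ((j + s : ℕ) : ℝ)) ^ (-α) := by
        apply Real.rpow_le_rpow_of_nonpos (by positivity) _ (by linarith)
        push_cast; linarith [Nat.cast_nonneg (α := ℝ) s]
      nlinarith [this]
    exact mul_le_mul (hδ s) h1 (hδ0 _) (by positivity)
  have hsum : Summable (fun s : ℕ => δ s * δ (j + s)) := by
    apply Summable.of_nonneg_of_le (fun s => mul_nonneg (hδ0 _) (hδ0 _)) hterm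
    exact hg.mul_right _
  calc ∑' s : ℕ, δ s * δ (j + s)
      ≤ ∑' s : ℕ, (C * (1 + (s : ℝ)) ^ (-α)) * (C * (1 + (j : ℝ)) ^ (-α)) :=
        Summable.tsum_le_tsum hterm hsum (hg.mul_right _)
    _ = S * (C * (1 + (j : ℝ)) ^ (-α)) := tsum_mul_right
    _ = S * C * (1 + (j : ℝ)) ^ (-α) := by ring
end

section
/- Let X₀,…,X_n be square-integrable random variables adapted to a filtration (𝒜_u) such that E(X_{u+1} − X_u | 𝒜_u) = 0 for all u (i.e., (X_u) is a martingale) with X₀ = 0. Then for p ≥ 2 there is a constant C_p with ‖X_n‖_p ≤ C_p ( ∑_{u=0}^{n−1} ‖X_{u+1} − X_u‖_p² )^{1/2}. -/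
open MeasureTheory Filter Set
open scoped ENNReal NNReal

namespace Stmt9Aux

variable {p : ℝ}


/-- derivative of `ψ x = |x|^(p-2) * x` is `(p-1)|x|^(p-2)` -/
lemma psi_hasDerivAt (hp : 2 ≤ p) (x : ℝ) :
    HasDerivAt (fun y : ℝ => |y| ^ (p - 2) * y) ((p - 1) * |x| ^ (p - 2)) x := by
  rcases eq_or_lt_of_le hp with h2 | h2
  · subst h2
    simp only [sub_self, Real.rpow_zero, one_mul]
    have := hasDerivAt_id x
    norm_num
    exact hasDerivAt_id' x
  · rcases eq_or_ne x 0 with rfl | hx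
    · have hne : p - 2 ≠ 0 := by linarith
      rw [abs_zero, Real.zero_rpow hne, mul_zero]
      rw [hasDerivAt_iff_tendsto_slope]
      have h0 : Tendsto (fun y : ℝ => |y| ^ (p - 2)) (nhds 0) (nhds 0) := by
        have hc : Continuous fun y : ℝ => |y| ^ (p - 2) :=
          continuous_abs.rpow_const (fun y => Or.inr (by linarith))
        simpa [Real.zero_rpow hne] using hc.tendsto 0
      refine Tendsto.congr' ?_ (h0.mono_left nhdsWithin_le_nhds)
      filter_upwards [self_mem_nhdsWithin] with y (hy : y ≠ 0)
      simp [slope_def_field, hy]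
    · have h1 : HasDerivAt (fun y : ℝ => |y|) (SignType.sign x : ℝ) x := hasDerivAt_abs hx
      have h2' : HasDerivAt (fun y : ℝ => |y| ^ (p - 2))
          ((SignType.sign x : ℝ) * (p - 2) * |x| ^ (p - 2 - 1)) x :=
        h1.rpow_const (Or.inl (abs_ne_zero.mpr hx))
      have h3 := h2'.mul (hasDerivAt_id x)
      refine h3.congr_deriv (Eq.symm ?_)
      have habs : (0:ℝ) < |x| := abs_pos.mpr hx
      have hsign : (SignType.sign x : ℝ) * x = |x| := by
        rcases lt_or_gt_of_ne hx with h | h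
        · simp [h, abs_of_neg h]
        · simp [h, abs_of_pos h]
      have : |x| ^ (p - 2 - 1) * |x| = |x| ^ (p - 2) := by
        rw [← Real.rpow_add_one (ne_of_gt habs)]
        ring_nf
      calc (p - 1) * |x| ^ (p - 2)
          = (p - 2) * |x| ^ (p-2) + |x| ^ (p-2) := by ring
        _ = (SignType.sign x : ℝ) * (p - 2) * |x| ^ (p - 2 - 1) * x + |x| ^ (p - 2) * 1 := by
            rw [← this, ← hsign]; ring


lemma abs_le_of_mem_uIcc {a b x : ℝ} (hx : x ∈ uIcc a b) : |x| ≤ max |a| |b| := by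
  rw [Set.mem_uIcc] at hx
  rcases hx with ⟨h1, h2⟩ | ⟨h1, h2⟩
  · exact (abs_le_max_abs_abs h1 h2).trans (by simp [max_comm])
  · exact (abs_le_max_abs_abs h1 h2).trans (by simp [max_comm])

lemma psi_lipschitz (hp : 2 ≤ p) (a b : ℝ) :
    |(|a| ^ (p - 2) * a) - (|b| ^ (p - 2) * b)|
      ≤ (p - 1) * (max |a| |b|) ^ (p - 2) * |a - b| := by
  set M := max |a| |b| with hM
  have hM0 : 0 ≤ M := le_trans (abs_nonneg a) (le_max_left _ _)
  have key := Convex.norm_image_sub_le_of_norm_hasDerivWithin_le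
    (f := fun y : ℝ => |y| ^ (p - 2) * y) (f' := fun y : ℝ => (p - 1) * |y| ^ (p - 2))
    (C := (p - 1) * M ^ (p - 2)) (s := uIcc b a)
    (fun x _ => (psi_hasDerivAt hp x).hasDerivWithinAt)
    (fun x hx => by
      have h1 : |x| ≤ M := (abs_le_of_mem_uIcc hx).trans (by simp [hM, max_comm])
      have h2 : |x| ^ (p - 2) ≤ M ^ (p - 2) :=
        Real.rpow_le_rpow (abs_nonneg x) h1 (by linarith)
      have h3 : (0:ℝ) ≤ (p - 1) * |x| ^ (p - 2) :=
        mul_nonneg (by linarith) (Real.rpow_nonneg (abs_nonneg x) _)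
      show ‖(p - 1) * |x| ^ (p - 2)‖ ≤ _
      rw [Real.norm_eq_abs, abs_of_nonneg h3]
      exact mul_le_mul_of_nonneg_left h2 (by linarith))
    (convex_uIcc b a) (left_mem_uIcc (a := b) (b := a)) (right_mem_uIcc (a := b) (b := a))
  simpa [Real.norm_eq_abs] using key

lemma taylor_ineq (hp : 2 ≤ p) (s t : ℝ) :
    |s + t| ^ p ≤ |s| ^ p + p * |s| ^ (p - 2) * s * t
      + p * (p - 1) * (|s| + |t|) ^ (p - 2) * t ^ 2 := by
  have hp1 : (1:ℝ) < p := by linarith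
  set c : ℝ := p * |s| ^ (p - 2) * s with hc
  have key := Convex.norm_image_sub_le_of_norm_hasDerivWithin_le
    (f := fun y : ℝ => |y| ^ p - c * y)
    (f' := fun y : ℝ => p * |y| ^ (p - 2) * y - c)
    (C := p * (p - 1) * (|s| + |t|) ^ (p - 2) * |t|) (s := uIcc s (s + t))
    (fun x _ => by
      have h1 : HasDerivAt (fun y : ℝ => |y| ^ p) (p * |x| ^ (p - 2) * x) x :=
        hasDerivAt_abs_rpow x hp1
      exact (h1.sub ((hasDerivAt_id x).const_mul c)).hasDerivWithinAt.congr_deriv (by ring))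
    (fun x hx => by
      have hxs : |x - s| ≤ |t| := by
        rw [Set.mem_uIcc] at hx
        rw [abs_le]
        rcases hx with ⟨h1, h2⟩ | ⟨h1, h2⟩ <;>
          constructor <;> nlinarith [le_abs_self t, neg_abs_le t]
      have hxM : max |x| |s| ≤ |s| + |t| := by
        have := abs_le_of_mem_uIcc hx
        have h2 : |s + t| ≤ |s| + |t| := abs_add_le s t
        have h3 : |s| ≤ |s| + |t| := by nlinarith [abs_nonneg t]
        exact max_le (this.trans (max_le h3 h2)) h3
      have hlip := psi_lipschitz hp x s
      have hmono : (max |x| |s|) ^ (p - 2) ≤ (|s| + |t|) ^ (p - 2) :=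
        Real.rpow_le_rpow (le_trans (abs_nonneg x) (le_max_left _ _)) hxM (by linarith)
      show ‖p * |x| ^ (p - 2) * x - c‖ ≤ _
      rw [Real.norm_eq_abs]
      have : p * |x| ^ (p-2) * x - c = p * ((|x| ^ (p-2) * x) - (|s| ^ (p-2) * s)) := by
        rw [hc]; ring
      rw [this, abs_mul, abs_of_nonneg (by linarith : (0:ℝ) ≤ p)]
      calc p * |(|x| ^ (p-2) * x) - (|s| ^ (p-2) * s)|
          ≤ p * ((p - 1) * (max |x| |s|) ^ (p - 2) * |x - s|) := by
            exact mul_le_mul_of_nonneg_left hlip (by linarith)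
        _ ≤ p * ((p - 1) * (|s| + |t|) ^ (p - 2) * |t|) := by
            have h5 : (p - 1) * (max |x| |s|) ^ (p - 2) * |x - s|
                ≤ (p - 1) * (|s| + |t|) ^ (p - 2) * |t| := by
              apply mul_le_mul (mul_le_mul_of_nonneg_left hmono (by linarith)) hxs (abs_nonneg _)
              exact mul_nonneg (by linarith) (Real.rpow_nonneg (by positivity) _)
            exact mul_le_mul_of_nonneg_left h5 (by linarith)
        _ = p * (p - 1) * (|s| + |t|) ^ (p - 2) * |t| := by ring)
    (convex_uIcc s (s + t)) (left_mem_uIcc) (right_mem_uIcc)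
  have ht2 : |t| * |t| = t ^ 2 := by rw [abs_mul_abs_self, sq]
  have key2 : |s + t| ^ p - c * (s + t) - (|s| ^ p - c * s)
      ≤ p * (p - 1) * (|s| + |t|) ^ (p - 2) * |t| * |t| := by
    have h := (le_abs_self _).trans key
    simpa [Real.norm_eq_abs, show s + t - s = t by ring] using h
  have heq : p * (p - 1) * (|s| + |t|) ^ (p - 2) * |t| * |t|
      = p * (p - 1) * (|s| + |t|) ^ (p - 2) * t ^ 2 := by
    rw [mul_assoc, ht2]
  rw [heq] at key2
  have hcc : c * (s + t) - c * s = c * t := by ring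
  rw [hc] at key2 ⊢
  linarith


/-- final pointwise inequality -/
lemma pointwise_ineq (hp : 2 ≤ p) (s t : ℝ) :
    |s + t| ^ p ≤ |s| ^ p + p * |s| ^ (p - 2) * s * t
      + (p * (p - 1) * (2:ℝ) ^ (p - 2)) * (|s| ^ (p - 2) * t ^ 2 + |t| ^ p) := by
  have h1 := taylor_ineq hp s t
  have h2 : (|s| + |t|) ^ (p - 2) ≤ (2:ℝ) ^ (p - 2) * (|s| ^ (p - 2) + |t| ^ (p - 2)) := by
    have hm : |s| + |t| ≤ 2 * max |s| |t| := by
      rcases max_cases |s| |t| with ⟨h, _⟩ | ⟨h, _⟩ <;> rw [h] <;>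
        nlinarith [le_max_left |s| |t|, le_max_right |s| |t|, abs_nonneg s, abs_nonneg t]
    calc (|s| + |t|) ^ (p - 2) ≤ (2 * max |s| |t|) ^ (p - 2) :=
          Real.rpow_le_rpow (by positivity) hm (by linarith)
      _ = (2:ℝ) ^ (p - 2) * (max |s| |t|) ^ (p - 2) := by
          rw [Real.mul_rpow (by norm_num) (by positivity)]
      _ ≤ (2:ℝ) ^ (p - 2) * (|s| ^ (p - 2) + |t| ^ (p - 2)) := by
          have : (max |s| |t|) ^ (p - 2) ≤ |s| ^ (p - 2) + |t| ^ (p - 2) := by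
            rcases max_cases |s| |t| with ⟨h, _⟩ | ⟨h, _⟩ <;> rw [h] <;>
              nlinarith [Real.rpow_nonneg (abs_nonneg s) (p-2),
                Real.rpow_nonneg (abs_nonneg t) (p-2)]
          exact mul_le_mul_of_nonneg_left this (by positivity)
  have h3 : |t| ^ (p - 2) * t ^ 2 = |t| ^ p := by
    rw [show t ^ 2 = |t| ^ ((2:ℕ):ℝ) by rw [Real.rpow_natCast, sq_abs],
      ← Real.rpow_add' (abs_nonneg t) (by push_cast; intro h; linarith)]
    norm_num
  have h4 : p * (p - 1) * (|s| + |t|) ^ (p - 2) * t ^ 2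
      ≤ p * (p - 1) * (2:ℝ) ^ (p - 2) * (|s| ^ (p - 2) * t ^ 2 + |t| ^ p) := by
    have hpp : (0:ℝ) ≤ p * (p - 1) := by nlinarith
    calc p * (p - 1) * (|s| + |t|) ^ (p - 2) * t ^ 2
        ≤ p * (p - 1) * ((2:ℝ) ^ (p - 2) * (|s| ^ (p - 2) + |t| ^ (p - 2))) * t ^ 2 := by
          apply mul_le_mul_of_nonneg_right _ (sq_nonneg t)
          exact mul_le_mul_of_nonneg_left h2 hpp
      _ = p * (p - 1) * (2:ℝ) ^ (p - 2) * (|s| ^ (p - 2) * t ^ 2 + |t| ^ (p - 2) * t ^ 2) := by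
          ring
      _ = p * (p - 1) * (2:ℝ) ^ (p - 2) * (|s| ^ (p - 2) * t ^ 2 + |t| ^ p) := by rw [h3]
  linarith

/-- scalar recursion lemma -/
lemma scalar_step (hp : 2 ≤ p) {K A B A' : ℝ} (hK : 0 < K) (hA : 0 ≤ A) (hB : 0 ≤ B)
    (hA' : 0 ≤ A') (htri : A' ≤ A + B)
    (hrec : A' ^ p ≤ A ^ p + K * (A ^ (p - 2) * B ^ 2 + B ^ p)) :
    A' ^ 2 ≤ A ^ 2 + (4 + 2 * K) * B ^ 2 := by
  have hp0 : (0:ℝ) < p := by linarith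
  rcases le_or_gt A B with hAB | hBA
  · have h1 : A' ≤ 2 * B := by linarith
    nlinarith
  · -- B < A, so A > 0
    have hApos : 0 < A := lt_of_le_of_lt hB hBA
    have hBp : B ^ p ≤ A ^ (p - 2) * B ^ 2 := by
      have e1 : B ^ p = B ^ (p - 2) * B ^ 2 := by
        rw [show B ^ 2 = B ^ ((2:ℕ):ℝ) by rw [Real.rpow_natCast], ← Real.rpow_add' hB
          (by push_cast; intro h; linarith)]
        norm_num
      rw [e1]
      exact mul_le_mul_of_nonneg_right
        (Real.rpow_le_rpow hB hBA.le (by linarith)) (sq_nonneg B)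
    set x : ℝ := 2 * K * B ^ 2 / A ^ 2 with hx
    have hx0 : 0 ≤ x := by positivity
    have hApow : A ^ (p - 2) * B ^ 2 = A ^ p * (B ^ 2 / A ^ 2) := by
      rw [show A ^ p = A ^ (p - 2) * A ^ 2 by
        rw [show A ^ 2 = A ^ ((2:ℕ):ℝ) by rw [Real.rpow_natCast], ← Real.rpow_add' hA
          (by push_cast; intro h; linarith)]; norm_num]
      field_simp
    have hrec2 : A' ^ p ≤ A ^ p * (1 + x) := by
      have : A ^ p + K * (A ^ (p - 2) * B ^ 2 + B ^ p) ≤ A ^ p + 2 * K * (A ^ (p-2) * B ^ 2) := by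
        nlinarith
      have h5 : A ^ p + 2 * K * (A ^ (p-2) * B ^ 2) = A ^ p * (1 + x) := by
        rw [hApow, hx]; ring
      linarith
    have hBern : (1 + x) ^ (2 / p) ≤ 1 + (2 / p) * x := by
      exact rpow_one_add_le_one_add_mul_self (by linarith) (by positivity) (by
        rw [div_le_one hp0]; linarith)
    have hA'2 : A' ^ 2 = (A' ^ p) ^ (2 / p) := by
      rw [← Real.rpow_natCast A' 2, ← Real.rpow_mul hA']
      congr 1
      field_simp
      norm_num
    have hmain : (A' ^ p) ^ (2 / p) ≤ (A ^ p * (1 + x)) ^ (2 / p) :=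
      Real.rpow_le_rpow (Real.rpow_nonneg hA' p) hrec2 (by positivity)
    have hsplit : (A ^ p * (1 + x)) ^ (2 / p) = A ^ 2 * (1 + x) ^ (2 / p) := by
      rw [Real.mul_rpow (Real.rpow_nonneg hA p) (by linarith),
        ← Real.rpow_natCast A 2, ← Real.rpow_mul hA]
      congr 2
      field_simp
      norm_num
    have hfin : A ^ 2 * (1 + x) ^ (2 / p) ≤ A ^ 2 + 2 * K * B ^ 2 := by
      calc A ^ 2 * (1 + x) ^ (2 / p) ≤ A ^ 2 * (1 + (2/p) * x) := by
            exact mul_le_mul_of_nonneg_left hBern (by positivity)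
        _ = A ^ 2 + (2/p) * (2 * K * B ^ 2) := by
            rw [hx]; field_simp
        _ ≤ A ^ 2 + 2 * K * B ^ 2 := by
            have h7 : (2:ℝ)/p ≤ 1 := by rw [div_le_one hp0]; linarith
            nlinarith [mul_nonneg (sub_nonneg.mpr h7) (by positivity : (0:ℝ) ≤ 2*K*B^2)]
    nlinarith [sq_nonneg B]


lemma rpow_sub_two_mul (hp : 2 ≤ p) {x : ℝ} (hx : 0 ≤ x) :
    x ^ (p - 2) * x ^ (2:ℕ) = x ^ p := by
  rw [show x ^ (2:ℕ) = x ^ ((2:ℕ):ℝ) by rw [Real.rpow_natCast],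
    ← Real.rpow_add' hx (by push_cast; intro h; linarith)]
  norm_num

lemma psi_continuous (hp : 2 ≤ p) : Continuous fun y : ℝ => |y| ^ (p - 2) * y :=
  (continuous_abs.rpow_const fun _ => Or.inr (by linarith)).mul continuous_id

set_option maxHeartbeats 1000000 in
lemma key_step (hp : 2 ≤ p) {Ω : Type} {m0 : MeasurableSpace Ω} {μ : Measure Ω}
    [IsProbabilityMeasure μ] {m : MeasurableSpace Ω} (hm : m ≤ m0)
    {S d : Ω → ℝ} (hS : MemLp S (ENNReal.ofReal p) μ) (hd : MemLp d (ENNReal.ofReal p) μ)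
    (hSm : StronglyMeasurable[m] S) (hcond : μ[d | m] =ᵐ[μ] 0) :
    (eLpNorm (S + d) (ENNReal.ofReal p) μ).toReal ^ 2
      ≤ (eLpNorm S (ENNReal.ofReal p) μ).toReal ^ 2
        + (4 + 2 * (p * (p - 1) * (2:ℝ) ^ (p - 2)))
          * (eLpNorm d (ENNReal.ofReal p) μ).toReal ^ 2 := by
  have hp0 : (0:ℝ) < p := by linarith
  set P := ENNReal.ofReal p with hPdef
  have hP0 : P ≠ 0 := by simp [hPdef, ENNReal.ofReal_eq_zero]; linarith
  have hPt : P ≠ ⊤ := ENNReal.ofReal_ne_top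
  have hPr : P.toReal = p := ENNReal.toReal_ofReal hp0.le
  have hP1 : (1:ℝ≥0∞) ≤ P := by
    rw [hPdef, show (1:ℝ≥0∞) = ENNReal.ofReal 1 by simp]
    exact ENNReal.ofReal_le_ofReal (by linarith)
  have hSd : MemLp (S + d) P μ := hS.add hd
  set K : ℝ := p * (p - 1) * (2:ℝ) ^ (p - 2) with hKdef
  have hK : 0 < K :=
    mul_pos (mul_pos hp0 (by linarith)) (Real.rpow_pos_of_pos two_pos _)
  set A : ℝ := (eLpNorm S P μ).toReal with hAdef
  set B : ℝ := (eLpNorm d P μ).toReal with hBdef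
  set A' : ℝ := (eLpNorm (S + d) P μ).toReal with hA'def
  have hA0 : 0 ≤ A := ENNReal.toReal_nonneg
  have hB0 : 0 ≤ B := ENNReal.toReal_nonneg
  have hA'0 : 0 ≤ A' := ENNReal.toReal_nonneg
  -- norms as integrals
  have eLp_eq : ∀ f : Ω → ℝ, MemLp f P μ →
      (eLpNorm f P μ).toReal = (∫ ω, |f ω| ^ p ∂μ) ^ p⁻¹ := by
    intro f hf
    rw [hf.eLpNorm_eq_integral_rpow_norm hP0 hPt,
      ENNReal.toReal_ofReal (Real.rpow_nonneg (integral_nonneg fun ω =>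
        Real.rpow_nonneg (norm_nonneg _) _) _)]
    simp [hPr, Real.norm_eq_abs]
  have hIS0 : 0 ≤ ∫ ω, |S ω| ^ p ∂μ := integral_nonneg fun ω => Real.rpow_nonneg (abs_nonneg _) _
  have hId0 : 0 ≤ ∫ ω, |d ω| ^ p ∂μ := integral_nonneg fun ω => Real.rpow_nonneg (abs_nonneg _) _
  have hISd0 : 0 ≤ ∫ ω, |S ω + d ω| ^ p ∂μ :=
    integral_nonneg fun ω => Real.rpow_nonneg (abs_nonneg _) _
  have hApow : A ^ p = ∫ ω, |S ω| ^ p ∂μ := by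
    rw [hAdef, eLp_eq S hS, Real.rpow_inv_rpow hIS0 (by linarith)]
  have hBpow : B ^ p = ∫ ω, |d ω| ^ p ∂μ := by
    rw [hBdef, eLp_eq d hd, Real.rpow_inv_rpow hId0 (by linarith)]
  have hA'pow : A' ^ p = ∫ ω, |S ω + d ω| ^ p ∂μ := by
    rw [hA'def, eLp_eq _ hSd]
    simp only [Pi.add_apply]
    rw [Real.rpow_inv_rpow hISd0 (by linarith)]
  -- integrability
  have hIS_int : Integrable (fun ω => |S ω| ^ p) μ := by
    simpa only [hPr, Real.norm_eq_abs] using hS.integrable_norm_rpow hP0 hPt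
  have hId_int : Integrable (fun ω => |d ω| ^ p) μ := by
    simpa only [hPr, Real.norm_eq_abs] using hd.integrable_norm_rpow hP0 hPt
  have hISd_int : Integrable (fun ω => |S ω + d ω| ^ p) μ := by
    have := hSd.integrable_norm_rpow hP0 hPt
    simpa only [hPr, Real.norm_eq_abs, Pi.add_apply] using this
  set g : Ω → ℝ := fun ω => |S ω| ^ (p - 2) * S ω with hgdef
  have hg_meas : AEStronglyMeasurable[m0] g μ :=
    (psi_continuous hp).comp_aestronglyMeasurable hS.1
  -- dominator
  set D : Ω → ℝ := fun ω => (|S ω| + |d ω|) ^ p with hDdef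
  have hD_int : Integrable D μ := by
    have h1 : MemLp (fun ω => |S ω| + |d ω|) P μ := hS.norm.add hd.norm
    have := h1.integrable_norm_rpow hP0 hPt
    refine this.congr (ae_of_all _ fun ω => ?_)
    simp only [hPr, Real.norm_eq_abs]
    rw [abs_of_nonneg (by positivity)]
  have hdom : ∀ (a b : ℝ), |a| ^ (p - 2) * |a| * |b| ≤ (|a| + |b|) ^ p ∧
      |a| ^ (p - 2) * b ^ 2 ≤ (|a| + |b|) ^ p := by
    intro a b
    have h0 : (0:ℝ) ≤ |a| := abs_nonneg a
    have h0' : (0:ℝ) ≤ |b| := abs_nonneg b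
    have hm1 : |a| ^ (p - 2) ≤ (|a| + |b|) ^ (p - 2) :=
      Real.rpow_le_rpow h0 (by linarith) (by linarith)
    have hsum : (|a| + |b|) ^ (p - 2) * (|a| + |b|) ^ (2:ℕ) = (|a| + |b|) ^ p :=
      rpow_sub_two_mul hp (by positivity)
    constructor
    · have hstep : |a| ^ (p - 2) * |a| * |b| ≤ (|a| + |b|) ^ (p - 2) * ((|a| + |b|) * (|a| + |b|)) := by
        have hR : (0:ℝ) ≤ (|a| + |b|) ^ (p - 2) :=
          Real.rpow_nonneg (by linarith) (p - 2)
        have h4 : |a| ^ (p - 2) * |a| ≤ (|a| + |b|) ^ (p - 2) * (|a| + |b|) :=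
          mul_le_mul hm1 (by linarith) h0 hR
        have h5 := mul_le_mul h4 (show |b| ≤ |a| + |b| by linarith) h0'
          (mul_nonneg hR (by linarith))
        calc |a| ^ (p - 2) * |a| * |b| ≤ (|a| + |b|) ^ (p - 2) * (|a| + |b|) * (|a| + |b|) := h5
          _ = (|a| + |b|) ^ (p - 2) * ((|a| + |b|) * (|a| + |b|)) := by ring
      have hend : (|a| + |b|) ^ (p - 2) * ((|a| + |b|) * (|a| + |b|)) = (|a| + |b|) ^ p := by
        rw [← hsum]; ring
      linarith
    · have h2 : b ^ 2 ≤ (|a| + |b|) * (|a| + |b|) := by nlinarith [sq_abs b, le_abs_self b]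
      have hstep : |a| ^ (p - 2) * b ^ 2 ≤ (|a| + |b|) ^ (p - 2) * ((|a| + |b|) * (|a| + |b|)) := by
        have hR : (0:ℝ) ≤ (|a| + |b|) ^ (p - 2) :=
          Real.rpow_nonneg (by linarith) (p - 2)
        exact mul_le_mul hm1 h2 (sq_nonneg b) hR
      have hend : (|a| + |b|) ^ (p - 2) * ((|a| + |b|) * (|a| + |b|)) = (|a| + |b|) ^ p := by
        rw [← hsum]; ring
      linarith
  have hgd_int : Integrable (fun ω => g ω * d ω) μ := by
    refine hD_int.mono' (hg_meas.mul hd.1) (ae_of_all _ fun ω => ?_)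
    show ‖(|S ω| ^ (p - 2) * S ω) * d ω‖ ≤ (|S ω| + |d ω|) ^ p
    rw [Real.norm_eq_abs, abs_mul, abs_mul, abs_of_nonneg
      (Real.rpow_nonneg (abs_nonneg _) _)]
    exact (hdom (S ω) (d ω)).1
  have hq_int : Integrable (fun ω => |S ω| ^ (p - 2) * d ω ^ 2) μ := by
    refine hD_int.mono' ?_ (ae_of_all _ fun ω => ?_)
    · exact ((continuous_abs.rpow_const fun _ => Or.inr (by linarith)).comp_aestronglyMeasurable
        hS.1).mul ((continuous_pow 2).comp_aestronglyMeasurable hd.1)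
    · show ‖|S ω| ^ (p - 2) * d ω ^ 2‖ ≤ (|S ω| + |d ω|) ^ p
      rw [Real.norm_eq_abs, abs_of_nonneg (by positivity)]
      exact (hdom (S ω) (d ω)).2
  -- middle term vanishes
  have hzero : ∫ ω, g ω * d ω ∂μ = 0 := by
    have hgm : StronglyMeasurable[m] g :=
      (psi_continuous hp).comp_stronglyMeasurable hSm
    have hd_int : Integrable d μ := hd.integrable hP1
    have h1 : μ[g * d | m] =ᵐ[μ] g * μ[d | m] :=
      condExp_mul_of_stronglyMeasurable_left hgm (by exact hgd_int) hd_int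
    have h2 : g * μ[d | m] =ᵐ[μ] 0 := by
      filter_upwards [hcond] with ω hω
      simp [hω]
    calc ∫ ω, g ω * d ω ∂μ = ∫ ω, (μ[g * d | m]) ω ∂μ := (integral_condExp hm).symm
      _ = ∫ ω, (0:ℝ) ∂μ := integral_congr_ae (h1.trans h2)
      _ = 0 := integral_zero _ _
  -- Hölder bound
  have hH : ∫ ω, |S ω| ^ (p - 2) * d ω ^ 2 ∂μ ≤ A ^ (p - 2) * B ^ 2 := by
    rcases eq_or_lt_of_le hp with hpe | hplt
    · -- p = 2
      have he : ∀ ω, |S ω| ^ (p - 2) * d ω ^ 2 = d ω ^ 2 := by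
        intro ω; rw [← hpe]; norm_num
      have hB2 : B ^ 2 = ∫ ω, |d ω| ^ p ∂μ := by
        rw [← hBpow, ← hpe]; norm_num
      have : ∫ ω, |S ω| ^ (p - 2) * d ω ^ 2 ∂μ = ∫ ω, |d ω| ^ p ∂μ := by
        refine integral_congr_ae (ae_of_all _ fun ω => ?_)
        show |S ω| ^ (p - 2) * d ω ^ 2 = |d ω| ^ p
        rw [he ω, ← hpe, show ((2:ℝ)) = ((2:ℕ):ℝ) by norm_num, Real.rpow_natCast, sq_abs]
      rw [this, ← hB2, show p - 2 = 0 by rw [← hpe]; ring, Real.rpow_zero, one_mul]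
    · -- p > 2
      have hconj : Real.HolderConjugate (p / (p - 2)) (p / 2) := by
        rw [Real.holderConjugate_iff]
        constructor
        · rw [lt_div_iff₀ (by linarith)]; linarith
        · field_simp
          ring
      have memf : MemLp (fun ω => |S ω| ^ (p - 2)) (ENNReal.ofReal (p / (p - 2))) μ := by
        have h1 := hS.norm_rpow_div (ENNReal.ofReal (p - 2))
        rw [ENNReal.toReal_ofReal (by linarith)] at h1
        rw [show ENNReal.ofReal (p / (p - 2)) = P / ENNReal.ofReal (p - 2) by
          rw [hPdef, ENNReal.ofReal_div_of_pos (by linarith)]]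
        exact h1
      have memg2 : MemLp (fun ω => d ω ^ 2) (ENNReal.ofReal (p / 2)) μ := by
        have h1 := hd.norm_rpow_div (ENNReal.ofReal 2)
        rw [ENNReal.toReal_ofReal (by norm_num)] at h1
        rw [show ENNReal.ofReal (p / 2) = P / ENNReal.ofReal 2 by
          rw [hPdef, ENNReal.ofReal_div_of_pos (by norm_num)]]
        refine h1.ae_eq (ae_of_all _ fun ω => ?_)
        rw [Real.norm_eq_abs, show ((2:ℝ)) = ((2:ℕ):ℝ) by norm_num, Real.rpow_natCast, sq_abs]
      have hHold := integral_mul_le_Lp_mul_Lq_of_nonneg hconj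
        (ae_of_all _ fun ω => Real.rpow_nonneg (abs_nonneg (S ω)) _)
        (ae_of_all _ fun ω => sq_nonneg (d ω)) memf memg2
      have e1 : ∫ ω, (|S ω| ^ (p - 2)) ^ (p / (p - 2)) ∂μ = ∫ ω, |S ω| ^ p ∂μ := by
        refine integral_congr_ae (ae_of_all _ fun ω => ?_)
        show (|S ω| ^ (p - 2)) ^ (p / (p - 2)) = |S ω| ^ p
        rw [← Real.rpow_mul (abs_nonneg _)]
        congr 1
        have hne : p - 2 ≠ 0 := by linarith
        field_simp
      have e2 : ∫ ω, (d ω ^ 2) ^ (p / 2) ∂μ = ∫ ω, |d ω| ^ p ∂μ := by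
        refine integral_congr_ae (ae_of_all _ fun ω => ?_)
        show (d ω ^ 2) ^ (p / 2) = |d ω| ^ p
        rw [show d ω ^ 2 = |d ω| ^ ((2:ℕ):ℝ) by rw [Real.rpow_natCast, sq_abs],
          ← Real.rpow_mul (abs_nonneg _)]
        congr 1
        push_cast
        field_simp
      rw [e1, e2] at hHold
      have e3 : (∫ ω, |S ω| ^ p ∂μ) ^ (1 / (p / (p - 2))) = A ^ (p - 2) := by
        rw [← hApow, ← Real.rpow_mul hA0]
        congr 1
        have hne : p - 2 ≠ 0 := by linarith
        field_simp
      have e4 : (∫ ω, |d ω| ^ p ∂μ) ^ (1 / (p / 2)) = B ^ 2 := by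
        rw [← hBpow, ← Real.rpow_mul hB0, show p * (1 / (p / 2)) = 2 by field_simp,
          show ((2:ℝ)) = ((2:ℕ):ℝ) by norm_num, Real.rpow_natCast]
      rw [e3, e4] at hHold
      exact hHold
  -- main recursion inequality
  have hrec : A' ^ p ≤ A ^ p + K * (A ^ (p - 2) * B ^ 2 + B ^ p) := by
    have hmono : ∫ ω, |S ω + d ω| ^ p ∂μ ≤ ∫ ω, (|S ω| ^ p + p * (g ω * d ω)
        + K * (|S ω| ^ (p - 2) * d ω ^ 2 + |d ω| ^ p)) ∂μ := by
      refine integral_mono_ae hISd_int (show Integrable (fun ω => |S ω| ^ p + p * (g ω * d ω)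
          + K * (|S ω| ^ (p - 2) * d ω ^ 2 + |d ω| ^ p)) μ from
          (hIS_int.add (hgd_int.const_mul p)).add ((hq_int.add hId_int).const_mul K))
        (ae_of_all _ fun ω => ?_)
      · have := pointwise_ineq hp (S ω) (d ω)
        rw [hgdef]
        simp only []
        calc |S ω + d ω| ^ p ≤ |S ω| ^ p + p * |S ω| ^ (p - 2) * S ω * d ω
            + K * (|S ω| ^ (p - 2) * d ω ^ 2 + |d ω| ^ p) := by
              rw [hKdef]; exact this
          _ = |S ω| ^ p + p * (|S ω| ^ (p - 2) * S ω * d ω)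
            + K * (|S ω| ^ (p - 2) * d ω ^ 2 + |d ω| ^ p) := by ring
    have hint4 : Integrable (fun ω => p * (g ω * d ω)) μ := hgd_int.const_mul p
    have hint1 : Integrable (fun ω => |S ω| ^ p + p * (g ω * d ω)) μ := hIS_int.add hint4
    have hint3 : Integrable (fun ω => |S ω| ^ (p - 2) * d ω ^ 2 + |d ω| ^ p) μ :=
      hq_int.add hId_int
    have hint2 : Integrable (fun ω => K * (|S ω| ^ (p - 2) * d ω ^ 2 + |d ω| ^ p)) μ :=
      hint3.const_mul K
    rw [integral_add hint1 hint2, integral_add hIS_int hint4,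
      integral_const_mul, integral_const_mul,
      integral_add hq_int hId_int, hzero, mul_zero, add_zero] at hmono
    rw [hA'pow, hApow, hBpow]
    nlinarith [hmono, hH, mul_le_mul_of_nonneg_left hH hK.le]
  -- triangle inequality
  have htri : A' ≤ A + B := by
    have h := eLpNorm_add_le hS.1 hd.1 hP1
    have hfin : eLpNorm S P μ + eLpNorm d P μ ≠ ⊤ :=
      ENNReal.add_ne_top.mpr ⟨hS.eLpNorm_ne_top, hd.eLpNorm_ne_top⟩
    calc A' ≤ (eLpNorm S P μ + eLpNorm d P μ).toReal := ENNReal.toReal_mono hfin h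
      _ = A + B := ENNReal.toReal_add hS.eLpNorm_ne_top hd.eLpNorm_ne_top
  exact scalar_step hp hK hA0 hB0 hA'0 htri hrec


end Stmt9Aux

open Stmt9Aux

theorem stmt_9 (p : ℝ) (hp : 2 ≤ p) :
    ∃ C : ℝ, 0 < C ∧
      ∀ (Ω : Type) (m0 : MeasurableSpace Ω) (μ : Measure Ω)
        (_ : IsProbabilityMeasure μ) (𝒜 : Filtration ℕ m0)
        (X : ℕ → Ω → ℝ),
        Martingale X 𝒜 μ →
        (∀ n, MemLp (X n) (ENNReal.ofReal p) μ) →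
        X 0 = 0 →
        ∀ n : ℕ,
          (eLpNorm (X n) (ENNReal.ofReal p) μ).toReal
            ≤ C * Real.sqrt (∑ u ∈ Finset.range n,
                ((eLpNorm (X (u + 1) - X u) (ENNReal.ofReal p) μ).toReal) ^ 2) := by
  have hK : 0 < p * (p - 1) * (2:ℝ) ^ (p - 2) :=
    mul_pos (mul_pos (by linarith) (by linarith)) (Real.rpow_pos_of_pos two_pos _)
  set K' : ℝ := 4 + 2 * (p * (p - 1) * (2:ℝ) ^ (p - 2)) with hK'def
  have hK' : 0 < K' := by rw [hK'def]; linarith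
  refine ⟨Real.sqrt K', Real.sqrt_pos.mpr hK', ?_⟩
  intro Ω m0 μ hprob 𝒜 X hX hL hX0 n
  haveI := hprob
  have hP1 : (1:ℝ≥0∞) ≤ ENNReal.ofReal p := by
    rw [show (1:ℝ≥0∞) = ENNReal.ofReal 1 by simp]
    exact ENNReal.ofReal_le_ofReal (by linarith)
  have key : ∀ n : ℕ, (eLpNorm (X n) (ENNReal.ofReal p) μ).toReal ^ 2
      ≤ K' * ∑ u ∈ Finset.range n,
          ((eLpNorm (X (u + 1) - X u) (ENNReal.ofReal p) μ).toReal) ^ 2 := by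
    intro n
    induction n with
    | zero => simp [hX0]
    | succ n ih =>
      have hd : MemLp (X (n + 1) - X n) (ENNReal.ofReal p) μ := (hL (n + 1)).sub (hL n)
      have hcond : μ[X (n + 1) - X n | 𝒜 n] =ᵐ[μ] 0 := by
        have h1 := condExp_sub (m := 𝒜 n) (μ := μ)
          ((hL (n + 1)).integrable hP1) ((hL n).integrable hP1)
        have h2 := hX.condExp_ae_eq (Nat.le_succ n)
        have h3 : μ[X n | 𝒜 n] = X n :=
          condExp_of_stronglyMeasurable (𝒜.le n) (hX.stronglyAdapted n) ((hL n).integrable hP1)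
        filter_upwards [h1, h2] with ω hω1 hω2
        rw [hω1]
        simp only [Pi.sub_apply, Pi.zero_apply]
        rw [hω2, h3]
        ring
      have hkey := key_step hp (𝒜.le n) (hL n) hd (hX.stronglyAdapted n) hcond
      have hre : X n + (X (n + 1) - X n) = X (n + 1) := by
        funext ω; simp
      rw [hre] at hkey
      rw [Finset.sum_range_succ, mul_add]
      calc (eLpNorm (X (n + 1)) (ENNReal.ofReal p) μ).toReal ^ 2
          ≤ (eLpNorm (X n) (ENNReal.ofReal p) μ).toReal ^ 2
            + K' * (eLpNorm (X (n + 1) - X n) (ENNReal.ofReal p) μ).toReal ^ 2 := hkey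
        _ ≤ K' * ∑ u ∈ Finset.range n,
              ((eLpNorm (X (u + 1) - X u) (ENNReal.ofReal p) μ).toReal) ^ 2
            + K' * (eLpNorm (X (n + 1) - X n) (ENNReal.ofReal p) μ).toReal ^ 2 := by
            linarith
  have h2 := key n
  have hA0 : 0 ≤ (eLpNorm (X n) (ENNReal.ofReal p) μ).toReal := ENNReal.toReal_nonneg
  calc (eLpNorm (X n) (ENNReal.ofReal p) μ).toReal
      = Real.sqrt ((eLpNorm (X n) (ENNReal.ofReal p) μ).toReal ^ 2) :=
        (Real.sqrt_sq hA0).symm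
    _ ≤ Real.sqrt (K' * ∑ u ∈ Finset.range n,
          ((eLpNorm (X (u + 1) - X u) (ENNReal.ofReal p) μ).toReal) ^ 2) :=
        Real.sqrt_le_sqrt h2
    _ = Real.sqrt K' * Real.sqrt (∑ u ∈ Finset.range n,
          ((eLpNorm (X (u + 1) - X u) (ENNReal.ofReal p) μ).toReal) ^ 2) :=
        Real.sqrt_mul hK'.le _
end
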